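/- Let H = (V, E, ℓ) be an edge-colored hypergraph with k colors, and let d : V × [k] → [0,1] and γ : E → [0,1] satisfy Σ_{c=1}^k d(v,c) ≥ k − 1 for every v ∈ V and d(v, ℓ(e)) ≤ γ(e) for every e ∈ E and every v ∈ e. Then there exists a vertex coloring λ : V → [k] such that for every color c ∈ [k], the number of hyperedges of color c that are unsatisfied by λ is at most 2·Σ_{e ∈ E_c} γ(e), where E_c = {e ∈ E : ℓ(e) = c}. In particular, for every real p ≥ 1, (Σ_{c=1}^k m̂_c^p)^{1/p} ≤ 2·(Σ_{c=1}^k (Σ_{e ∈ E_c} γ(e))^p)^{1/p}, where m̂_c is the number of hyperedges of color c unsatisfied by λ. -/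
import Mathlib


open scoped Classical

theorem stmt16 {V ι : Type*} [Fintype V] [Fintype ι] (k : ℕ) (hk : 0 < k)
    (edge : ι → Finset V) (ℓ : ι → Fin k)
    (d : V → Fin k → ℝ) (γ : ι → ℝ)
    (hd : ∀ v c, d v c ∈ Set.Icc (0 : ℝ) 1)
    (hγ : ∀ e, γ e ∈ Set.Icc (0 : ℝ) 1)
    (hsum : ∀ v, (k : ℝ) - 1 ≤ ∑ c : Fin k, d v c)
    (hle : ∀ e, ∀ v ∈ edge e, d v (ℓ e) ≤ γ e) :
    ∃ lam : V → Fin k,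
      (∀ c : Fin k,
        ((Finset.univ.filter (fun e : ι =>
            ℓ e = c ∧ ¬ (∀ v ∈ edge e, lam v = c))).card : ℝ) ≤
          2 * ∑ e ∈ Finset.univ.filter (fun e : ι => ℓ e = c), γ e) ∧
      (∀ p : ℝ, 1 ≤ p →
        (∑ c : Fin k,
          (((Finset.univ.filter (fun e : ι =>
              ℓ e = c ∧ ¬ (∀ v ∈ edge e, lam v = c))).card : ℝ)) ^ p) ^ (1 / p) ≤
        2 * (∑ c : Fin k,
          (∑ e ∈ Finset.univ.filter (fun e : ι => ℓ e = c), γ e) ^ p) ^ (1 / p)) := by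
  have hex : ∀ v : V, ∃ c : Fin k, ∀ c' : Fin k, d v c ≤ d v c' := by
    intro v
    obtain ⟨c, _, hc⟩ := Finset.exists_min_image Finset.univ (d v)
      (Finset.univ_nonempty_iff.mpr ⟨⟨0, hk⟩⟩)
    exact ⟨c, fun c' => hc c' (Finset.mem_univ _)⟩
  choose lam hlam using hex
  have key : ∀ v c, lam v ≠ c → (1/2 : ℝ) ≤ d v c := by
    intro v c hne
    have h1 : d v (lam v) ≤ d v c := hlam v c
    have h2 : ∑ c' : Fin k, (1 - d v c') ≤ 1 := by
      have heq : ∑ c' : Fin k, (1 - d v c') = (k : ℝ) - ∑ c' : Fin k, d v c' := by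
        rw [Finset.sum_sub_distrib]; simp
      rw [heq]; linarith [hsum v]
    have h3 : (1 - d v c) + (1 - d v (lam v)) ≤ ∑ c' : Fin k, (1 - d v c') := by
      have hs := Finset.sum_le_sum_of_subset_of_nonneg
        (Finset.subset_univ ({c, lam v} : Finset (Fin k)))
        (fun i _ _ => sub_nonneg.mpr (hd v i).2)
      rwa [Finset.sum_pair (Ne.symm hne)] at hs
    linarith
  have hbound : ∀ c : Fin k,
      ((Finset.univ.filter (fun e : ι =>
          ℓ e = c ∧ ¬ (∀ v ∈ edge e, lam v = c))).card : ℝ) ≤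
        2 * ∑ e ∈ Finset.univ.filter (fun e : ι => ℓ e = c), γ e := by
    intro c
    set S := Finset.univ.filter (fun e : ι =>
      ℓ e = c ∧ ¬ (∀ v ∈ edge e, lam v = c)) with hS
    have h1 : ∀ e ∈ S, (1/2 : ℝ) ≤ γ e := by
      intro e he
      rw [hS, Finset.mem_filter] at he
      obtain ⟨-, hc, hns⟩ := he
      push_neg at hns
      obtain ⟨v, hv, hne⟩ := hns
      calc (1/2 : ℝ) ≤ d v c := key v c hne
        _ = d v (ℓ e) := by rw [hc]
        _ ≤ γ e := hle e v hv
    have h2 : (S.card : ℝ) * (1/2) ≤ ∑ e ∈ S, γ e := by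
      have := Finset.card_nsmul_le_sum S γ (1/2) h1
      simpa [nsmul_eq_mul] using this
    have h3 : ∑ e ∈ S, γ e ≤ ∑ e ∈ Finset.univ.filter (fun e : ι => ℓ e = c), γ e := by
      apply Finset.sum_le_sum_of_subset_of_nonneg
      · intro e he
        rw [hS, Finset.mem_filter] at he
        simp [he.2.1]
      · exact fun e _ _ => (hγ e).1
    linarith
  refine ⟨lam, hbound, ?_⟩
  intro p hp
  have hp0 : p ≠ 0 := by positivity
  have hpinv : 0 ≤ 1 / p := by positivity
  set A : Fin k → ℝ := fun c =>
    ((Finset.univ.filter (fun e : ι =>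
        ℓ e = c ∧ ¬ (∀ v ∈ edge e, lam v = c))).card : ℝ) with hA
  set B : Fin k → ℝ := fun c =>
    ∑ e ∈ Finset.univ.filter (fun e : ι => ℓ e = c), γ e with hB
  have hA0 : ∀ c, 0 ≤ A c := fun c => Nat.cast_nonneg _
  have hB0 : ∀ c, 0 ≤ B c := fun c =>
    Finset.sum_nonneg fun e _ => (hγ e).1
  have h1 : ∑ c : Fin k, A c ^ p ≤ (2 : ℝ) ^ p * ∑ c : Fin k, B c ^ p := by
    rw [Finset.mul_sum]
    apply Finset.sum_le_sum
    intro c _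
    rw [← Real.mul_rpow (by norm_num) (hB0 c)]
    exact Real.rpow_le_rpow (hA0 c) (hbound c) (by linarith)
  have h2 : (∑ c : Fin k, A c ^ p) ^ (1/p) ≤
      ((2 : ℝ) ^ p * ∑ c : Fin k, B c ^ p) ^ (1/p) :=
    Real.rpow_le_rpow (Finset.sum_nonneg fun c _ => Real.rpow_nonneg (hA0 c) p) h1 hpinv
  calc (∑ c : Fin k, A c ^ p) ^ (1/p)
      ≤ ((2 : ℝ) ^ p * ∑ c : Fin k, B c ^ p) ^ (1/p) := h2
    _ = 2 * (∑ c : Fin k, B c ^ p) ^ (1/p) := by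
        rw [Real.mul_rpow (Real.rpow_nonneg (by norm_num) p)
          (Finset.sum_nonneg fun c _ => Real.rpow_nonneg (hB0 c) p),
          ← Real.rpow_mul (by norm_num : (0:ℝ) ≤ 2), mul_one_div_cancel hp0,
          Real.rpow_one]
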